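/- Let n ≥ 5 be a natural number and S a real number with S > n; set t = (S − n)/S. Let D be a real number with 0 ≤ D ≤ (2/3)·t·S³, and assume t·S²·(S − 2n) ≥ ((4t² − 9t + 3)/(3(1 − t)))·D − 2t²S²/(1 − t). Then S ≥ ((√465 − 7)/8)·n − (9/4)·(1 − √465/31). -/

import Mathlib

lemma stmt_1_aux (n S T : ℝ) (hn5 : 5 ≤ n) (hS0 : 0 < S)
    (quad : 0 ≤ 4 * S ^ 2 + (7 * n + 18) * S - 26 * n ^ 2 - 18 * n)
    (key : 4 * T ^ 2 + (7 * n + 18) * T = 26 * n ^ 2 + 18 * n - 324 / 31)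
    (hcon : S < T) : False := by
  nlinarith [key, quad, mul_pos (sub_pos.2 hcon) (show (0:ℝ) < T + S by linarith),
    mul_pos (sub_pos.2 hcon) (show (0:ℝ) < 7 * n + 18 by linarith)]

set_option maxHeartbeats 1000000 in
theorem stmt_1 (n : ℕ) (hn : 5 ≤ n) (S : ℝ) (hS : (n : ℝ) < S)
    (t : ℝ) (ht : t = (S - n) / S)
    (D : ℝ) (hD0 : 0 ≤ D) (hD1 : D ≤ 2 / 3 * t * S ^ 3)
    (h1 : t * S ^ 2 * (S - 2 * n) ≥
      (4 * t ^ 2 - 9 * t + 3) / (3 * (1 - t)) * D - 2 * t ^ 2 * S ^ 2 / (1 - t)) :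
    S ≥ (Real.sqrt 465 - 7) / 8 * n - 9 / 4 * (1 - Real.sqrt 465 / 31) := by
  have hn5 : (5:ℝ) ≤ (n:ℝ) := by exact_mod_cast hn
  have hn0 : (0:ℝ) < (n:ℝ) := by linarith
  have hS0 : (0:ℝ) < S := by linarith
  have hSne : S ≠ 0 := ne_of_gt hS0
  have hSn : (0:ℝ) < S - n := by linarith
  have htS : t * S = S - n := by rw [ht]; field_simp
  have htn : (1 - t) * S = n := by rw [ht]; field_simp; ring
  have hu0 : (0:ℝ) < 1 - t := by nlinarith
  have hune : (1:ℝ) - t ≠ 0 := ne_of_gt hu0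
  have cancel : ∀ x : ℝ, x / (1 - t) * (1 - t) = x := fun x => div_mul_cancel₀ x hune
  have cancel3 : ∀ x : ℝ, x / (3 * (1 - t)) * (3 * (1 - t)) = x := fun x =>
    div_mul_cancel₀ x (mul_ne_zero three_ne_zero hune)
  set a := Real.sqrt 465 with ha
  have ha0 : (0:ℝ) ≤ a := Real.sqrt_nonneg _
  have ha2 : a ^ 2 = 465 := Real.sq_sqrt (by norm_num)
  have ha21 : (21:ℝ) ≤ a := by nlinarith
  have haU : a ≤ 108/5 := by nlinarith
  by_cases hc : 0 ≤ 4 * t ^ 2 - 9 * t + 3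
  · -- coefficient nonnegative: use D ≥ 0
    have hcd : 0 ≤ (4 * t ^ 2 - 9 * t + 3) / (3 * (1 - t)) * D :=
      mul_nonneg (div_nonneg hc (by linarith)) hD0
    have h2 : -(2 * t ^ 2 * S ^ 2 / (1 - t)) ≤ t * S ^ 2 * (S - 2 * n) := by linarith
    have h3 := mul_le_mul_of_nonneg_right h2 hu0.le
    have eL : -(2 * t ^ 2 * S ^ 2 / (1 - t)) * (1 - t) = -(2 * (t * S) ^ 2) := by
      rw [neg_mul, cancel]; ring
    rw [eL, htS] at h3
    have p2 : t * S ^ 2 * (S - 2 * n) * (1 - t) = ((1 - t) * S) * (t * S) * (S - 2 * n) := by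
      ring
    rw [p2, htn, htS] at h3
    -- h3 : -(2*(S-n)^2) ≤ n * (S-n) * (S - 2n)
    have linA : 0 ≤ (n:ℝ) * S - 2 * n ^ 2 + 2 * S - 2 * n := by
      by_contra hcc
      push_neg at hcc
      nlinarith [mul_pos hSn (show (0:ℝ) < -((n:ℝ) * S - 2 * n ^ 2 + 2 * S - 2 * n) by linarith)]
    by_contra hcon
    push_neg at hcon
    have haux : 0 ≤ (108/5 - a) * ((n:ℝ)/8 + 9/124) * ((n:ℝ) + 2) := by
      apply mul_nonneg (mul_nonneg (by linarith) (by positivity)) (by linarith)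
    nlinarith [haux, sq_nonneg ((n:ℝ) - 5), linA,
      mul_pos (show (0:ℝ) < (n:ℝ) + 2 by linarith) (sub_pos.2 hcon)]
  · -- coefficient negative: use D ≤ 2/3 t S^3
    push_neg at hc
    have hc1 : (4 * t ^ 2 - 9 * t + 3) / (3 * (1 - t)) < 0 :=
      div_neg_of_neg_of_pos hc (by linarith)
    have hcd : (4 * t ^ 2 - 9 * t + 3) / (3 * (1 - t)) * (2 / 3 * t * S ^ 3) ≤
        (4 * t ^ 2 - 9 * t + 3) / (3 * (1 - t)) * D :=
      mul_le_mul_of_nonpos_left hD1 hc1.le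
    have h2 : (4 * t ^ 2 - 9 * t + 3) / (3 * (1 - t)) * (2 / 3 * t * S ^ 3)
        - 2 * t ^ 2 * S ^ 2 / (1 - t) ≤ t * S ^ 2 * (S - 2 * n) := by linarith
    have h3 := mul_le_mul_of_nonneg_right h2 (show (0:ℝ) ≤ 3 * (1 - t) by linarith)
    have eL : ((4 * t ^ 2 - 9 * t + 3) / (3 * (1 - t)) * (2 / 3 * t * S ^ 3)
        - 2 * t ^ 2 * S ^ 2 / (1 - t)) * (3 * (1 - t))
        = 2/3 * (4 * (t * S) ^ 2 - 9 * (t * S) * S + 3 * S ^ 2) * (t * S)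
          - 6 * (t * S) ^ 2 := by
      have e1 : ((4 * t ^ 2 - 9 * t + 3) / (3 * (1 - t)) * (2 / 3 * t * S ^ 3)
          - 2 * t ^ 2 * S ^ 2 / (1 - t)) * (3 * (1 - t))
          = ((4 * t ^ 2 - 9 * t + 3) / (3 * (1 - t)) * (3 * (1 - t))) * (2 / 3 * t * S ^ 3)
            - (2 * t ^ 2 * S ^ 2 / (1 - t) * (1 - t)) * 3 := by ring
      rw [e1, cancel3, cancel]; ring
    rw [eL, htS] at h3
    have eR : t * S ^ 2 * (S - 2 * n) * (3 * (1 - t))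
        = 3 * (((1 - t) * S) * (t * S)) * (S - 2 * n) := by ring
    rw [eR, htn, htS] at h3
    have quad : 0 ≤ 4 * S ^ 2 + (7 * (n:ℝ) + 18) * S - 26 * (n:ℝ) ^ 2 - 18 * n := by
      by_contra hcc
      push_neg at hcc
      nlinarith [mul_pos hSn (show (0:ℝ) <
        -(4 * S ^ 2 + (7 * (n:ℝ) + 18) * S - 26 * (n:ℝ) ^ 2 - 18 * n) by linarith)]
    set T : ℝ := (a - 7) / 8 * (n:ℝ) - 9 / 4 * (1 - a / 31) with hT
    have key : 4 * T ^ 2 + (7 * (n:ℝ) + 18) * T = 26 * (n:ℝ) ^ 2 + 18 * n - 324/31 := by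
      rw [hT]
      linear_combination (4 * ((n:ℝ)/8 + 9/124) ^ 2) * ha2
    by_contra hcon
    push_neg at hcon
    exact stmt_1_aux (n:ℝ) S T hn5 hS0 quad key hcon
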